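/- The free ℤ-module on isomorphism classes of finite abelian p-groups, equipped with the product [A]·[B] := Σ_[C] t(C,A,B)·[C], is an associative unital ℤ-algebra with unit the class of the trivial group. -/

import Mathlib

/-- A bundled finite abelian `p`-group. -/
structure FinAbPGroup (p : ℕ) where
  carrier : Type
  [commGroup : CommGroup carrier]
  [finite : Finite carrier]
  isPGroup : IsPGroup p carrier

attribute [instance] FinAbPGroup.commGroup FinAbPGroup.finite

instance FinAbPGroup.setoid (p : ℕ) : Setoid (FinAbPGroup p) where
  r X Y := Nonempty (X.carrier ≃* Y.carrier)
  iseqv := ⟨fun _ => ⟨MulEquiv.refl _⟩, fun ⟨e⟩ => ⟨e.symm⟩, fun ⟨e⟩ ⟨f⟩ => ⟨e.trans f⟩⟩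

/-- Isomorphism classes of finite abelian `p`-groups. -/
def FinAbPClass (p : ℕ) : Type 1 := Quotient (FinAbPGroup.setoid p)

/-- The class of the trivial group. -/
def trivialClass (p : ℕ) : FinAbPClass p :=
  ⟦{ carrier := PUnit, isPGroup := fun _ => ⟨0, Subsingleton.elim _ _⟩ }⟧

/-- The Hall number `t(C, A, B)`: the number of subgroups `A' ⊆ C` with
`A' ≅ A` and `C ⧸ A' ≅ B`. -/
noncomputable def hallNumber (C A B : Type) [CommGroup C] [CommGroup A] [CommGroup B] : ℕ :=
  Nat.card {A' : Subgroup C // Nonempty (A' ≃* A) ∧ Nonempty ((C ⧸ A') ≃* B)}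

/-- The Hall number on isomorphism classes (via choice of representatives). -/
noncomputable def hallNumberClass {p : ℕ} (c a b : FinAbPClass p) : ℕ :=
  hallNumber (Quotient.out c).carrier (Quotient.out a).carrier (Quotient.out b).carrier


namespace HallAux
open scoped Classical

/-- A `MulEquiv` between any two subsingleton monoids. -/
def mulEquivOfSubsingleton {G H : Type*} [MulOneClass G] [MulOneClass H]
    [Subsingleton G] [Subsingleton H] : G ≃* H where
  toFun _ := 1
  invFun _ := 1
  left_inv _ := Subsingleton.elim _ _
  right_inv _ := Subsingleton.elim _ _
  map_mul' _ _ := Subsingleton.elim _ _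

lemma hallNumber_congr {C C' A A' B B' : Type} [CommGroup C] [CommGroup C'] [CommGroup A]
    [CommGroup A'] [CommGroup B] [CommGroup B'] (ec : C ≃* C') (ea : A ≃* A') (eb : B ≃* B') :
    hallNumber C A B = hallNumber C' A' B' := by
  apply Nat.card_congr
  refine Equiv.subtypeEquiv (ec.mapSubgroup).toEquiv ?_
  intro H
  constructor
  · rintro ⟨⟨f⟩, ⟨g⟩⟩
    exact ⟨⟨((ec.subgroupMap H).symm.trans f).trans ea⟩,
      ⟨(((QuotientGroup.congr H (H.map ec.toMonoidHom) ec rfl).symm.trans g).trans eb)⟩⟩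
  · rintro ⟨⟨f⟩, ⟨g⟩⟩
    exact ⟨⟨((ec.subgroupMap H).trans f).trans ea.symm⟩,
      ⟨(((QuotientGroup.congr H (H.map ec.toMonoidHom) ec rfl).trans g).trans eb.symm)⟩⟩

lemma hallNumber_triv_left {C T B : Type} [CommGroup C] [CommGroup T] [CommGroup B]
    [Subsingleton T] :
    hallNumber C T B = if Nonempty (C ≃* B) then 1 else 0 := by
  unfold hallNumber
  split_ifs with h
  · obtain ⟨e⟩ := h
    rw [Nat.card_eq_one_iff_unique]
    constructor
    · constructor
      rintro ⟨H, ⟨f⟩, -⟩ ⟨H', ⟨f'⟩, -⟩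
      have : Subsingleton H := f.toEquiv.subsingleton
      have : Subsingleton H' := f'.toEquiv.subsingleton
      exact Subtype.ext ((Subgroup.eq_bot_of_subsingleton H).trans
        (Subgroup.eq_bot_of_subsingleton H').symm)
    · exact ⟨⟨⊥, ⟨mulEquivOfSubsingleton⟩, ⟨(QuotientGroup.quotientBot (G := C)).trans e⟩⟩⟩
  · rw [Nat.card_eq_zero]
    left
    constructor
    rintro ⟨H, ⟨f⟩, ⟨g⟩⟩
    have : Subsingleton H := f.toEquiv.subsingleton
    have hb : H = ⊥ := Subgroup.eq_bot_of_subsingleton H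
    subst hb
    exact h ⟨((QuotientGroup.quotientBot (G := C)).symm.trans g)⟩

lemma hallNumber_triv_right {C T A : Type} [CommGroup C] [CommGroup T] [CommGroup A]
    [Subsingleton T] :
    hallNumber C A T = if Nonempty (C ≃* A) then 1 else 0 := by
  unfold hallNumber
  have key : ∀ H : Subgroup C, Nonempty ((C ⧸ H) ≃* T) ↔ H = ⊤ := by
    intro H
    constructor
    · rintro ⟨g⟩
      have : Subsingleton (C ⧸ H) := g.toEquiv.subsingleton
      rw [eq_top_iff]
      intro x _
      exact (QuotientGroup.eq_one_iff x).mp (Subsingleton.elim _ _)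
    · rintro rfl
      have := QuotientGroup.subsingleton_quotient_top (G := C)
      exact ⟨mulEquivOfSubsingleton⟩
  split_ifs with h
  · obtain ⟨e⟩ := h
    rw [Nat.card_eq_one_iff_unique]
    constructor
    · constructor
      rintro ⟨H, -, hq⟩ ⟨H', -, hq'⟩
      exact Subtype.ext (((key H).mp hq).trans ((key H').mp hq').symm)
    · refine ⟨⟨⊤, ⟨Subgroup.topEquiv.trans e⟩, (key ⊤).mpr rfl⟩⟩
  · rw [Nat.card_eq_zero]
    left
    constructor
    rintro ⟨H, ⟨f⟩, hq⟩
    have := (key H).mp hq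
    subst this
    exact h ⟨Subgroup.topEquiv.symm.trans f⟩

lemma finite_classes_card (p n : ℕ) :
    {c : FinAbPClass p | Nat.card (Quotient.out c).carrier = n}.Finite := by
  rw [← Set.finite_coe_iff]
  let F : {c : FinAbPClass p | Nat.card (Quotient.out c).carrier = n} →
      (Fin n → Fin n → Fin n) := fun c i j =>
    (Finite.equivFinOfCardEq c.2) ((Finite.equivFinOfCardEq c.2).symm i *
      (Finite.equivFinOfCardEq c.2).symm j)
  apply Finite.of_injective F
  intro c c' h
  set e := Finite.equivFinOfCardEq c.2 with he
  set e' := Finite.equivFinOfCardEq c'.2 with he'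
  have hmul : ∀ x y, (e.trans e'.symm) (x * y) = (e.trans e'.symm) x * (e.trans e'.symm) y := by
    intro x y
    apply e'.injective
    have hF : F c (e x) (e y) = F c' (e x) (e y) := by rw [h]
    simp only [F, Equiv.symm_apply_apply, ← he, ← he'] at hF
    simpa [Equiv.trans_apply, Equiv.apply_symm_apply] using hF
  exact Subtype.ext (Quotient.out_equiv_out.mp ⟨MulEquiv.mk' (e.trans e'.symm) hmul⟩)

lemma support_finite {p : ℕ} (a b : FinAbPClass p) :
    {c : FinAbPClass p | hallNumberClass c a b ≠ 0}.Finite := by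
  apply Set.Finite.subset (finite_classes_card p
    (Nat.card (Quotient.out b).carrier * Nat.card (Quotient.out a).carrier))
  intro c hc
  obtain ⟨H, ⟨f⟩, ⟨g⟩⟩ := (Nat.card_ne_zero.mp hc).1.some
  show Nat.card (Quotient.out c).carrier = _
  rw [Subgroup.card_eq_card_quotient_mul_card_subgroup H,
    Nat.card_congr f.toEquiv, Nat.card_congr g.toEquiv]

instance {G : Type*} [Group G] [Finite G] : Finite (Subgroup G) :=
  Finite.of_injective (fun H => (H : Set G)) SetLike.coe_injective

variable {p : ℕ}

/-- The structure constants as a finitely supported function of `c`. -/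
noncomputable def mulFun (a b : FinAbPClass p) : FinAbPClass p →₀ ℤ :=
  Finsupp.onFinset (support_finite a b).toFinset (fun c => (hallNumberClass c a b : ℤ))
    (fun c hc => by
      rw [Set.Finite.mem_toFinset]
      exact fun h => hc (by simp [Set.mem_setOf_eq] at h ⊢; exact_mod_cast h))

@[simp] lemma mulFun_apply (a b c : FinAbPClass p) :
    mulFun a b c = (hallNumberClass c a b : ℤ) := rfl

/-- Right multiplication by the class `b`, extended linearly. -/
noncomputable def inner (a : FinAbPClass p) :
    (FinAbPClass p →₀ ℤ) →ₗ[ℤ] (FinAbPClass p →₀ ℤ) :=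
  Finsupp.lsum ℤ fun b => LinearMap.toSpanSingleton ℤ _ (mulFun a b)

/-- The Hall algebra multiplication as a bilinear map. -/
noncomputable def hallMul (p : ℕ) :
    (FinAbPClass p →₀ ℤ) →ₗ[ℤ] (FinAbPClass p →₀ ℤ) →ₗ[ℤ] (FinAbPClass p →₀ ℤ) :=
  Finsupp.lsum ℤ fun a => LinearMap.toSpanSingleton ℤ _ (inner a)

lemma hallMul_single (a : FinAbPClass p) (r : ℤ) :
    hallMul p (Finsupp.single a r) = r • inner a := by
  rw [hallMul, Finsupp.lsum_single, LinearMap.toSpanSingleton_apply]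

lemma inner_single (a b : FinAbPClass p) (r : ℤ) :
    inner a (Finsupp.single b r) = r • mulFun a b := by
  rw [inner, Finsupp.lsum_single, LinearMap.toSpanSingleton_apply]

lemma hallMul_single_single (a b : FinAbPClass p) :
    hallMul p (Finsupp.single a 1) (Finsupp.single b 1) = mulFun a b := by
  rw [hallMul_single, one_smul, inner_single, one_smul]

lemma sum_eq_sum_of_support {f : FinAbPClass p → ℕ} {s t : Finset (FinAbPClass p)}
    (hs : ∀ c ∉ s, f c = 0) (ht : ∀ c ∉ t, f c = 0) :
    ∑ c ∈ s, f c = ∑ c ∈ t, f c := by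
  classical
  trans ∑ c ∈ s ∪ t, f c
  · exact Finset.sum_subset Finset.subset_union_left (fun x _ hx => hs x hx)
  · exact (Finset.sum_subset Finset.subset_union_right (fun x _ hx => ht x hx)).symm

lemma out_mk_equiv (X : FinAbPGroup p) :
    Nonempty ((Quotient.out (⟦X⟧ : FinAbPClass p)).carrier ≃* X.carrier) :=
  Quotient.mk_out X

/-- Pairs of nested subgroups `N ⊆ M ⊆ E` with `E/M ≅ D`, `N ≅ A`, `M/N ≅ B`. -/
abbrev P1 (a b d e : FinAbPClass p) : Type :=
  Σ M : Subgroup (Quotient.out e).carrier,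
    {N : Subgroup M //
      Nonempty (((Quotient.out e).carrier ⧸ M) ≃* (Quotient.out d).carrier) ∧
      Nonempty (N ≃* (Quotient.out a).carrier) ∧
      Nonempty ((M ⧸ N) ≃* (Quotient.out b).carrier)}

/-- Pairs `N ⊆ E`, `B' ⊆ E/N` with `N ≅ A`, `B' ≅ B`, `(E/N)/B' ≅ D`. -/
abbrev P2 (a b d e : FinAbPClass p) : Type :=
  Σ N : Subgroup (Quotient.out e).carrier,
    {B' : Subgroup ((Quotient.out e).carrier ⧸ N) //
      Nonempty (N ≃* (Quotient.out a).carrier) ∧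
      Nonempty (B' ≃* (Quotient.out b).carrier) ∧
      Nonempty ((((Quotient.out e).carrier ⧸ N) ⧸ B') ≃* (Quotient.out d).carrier)}

lemma sumL [Fact p.Prime] (a b d e : FinAbPClass p) :
    ∑ c ∈ (support_finite a b).toFinset,
      hallNumberClass c a b * hallNumberClass e c d = Nat.card (P1 a b d e) := by
  classical
  set E := (Quotient.out e).carrier with hEdef
  letI : Fintype (Subgroup E) := Fintype.ofFinite _
  letI instF : ∀ M : Subgroup E, Fintype
      {N : Subgroup M //
        Nonempty ((E ⧸ M) ≃* (Quotient.out d).carrier) ∧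
        Nonempty (N ≃* (Quotient.out a).carrier) ∧
        Nonempty ((M ⧸ N) ≃* (Quotient.out b).carrier)} := fun M => Fintype.ofFinite _
  let φ : Subgroup E → FinAbPClass p := fun M =>
    ⟦{ carrier := M, isPGroup := IsPGroup.to_subgroup (Quotient.out e).isPGroup M }⟧
  have hφ : ∀ (M : Subgroup E) (c : FinAbPClass p),
      φ M = c ↔ Nonempty (M ≃* (Quotient.out c).carrier) := by
    intro M c
    exact Quotient.mk_eq_iff_out (s := FinAbPGroup.setoid p)
  have hcard : Nat.card (P1 a b d e) =
      ∑ M : Subgroup E, Nat.card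
        {N : Subgroup M //
          Nonempty ((E ⧸ M) ≃* (Quotient.out d).carrier) ∧
          Nonempty (N ≃* (Quotient.out a).carrier) ∧
          Nonempty ((M ⧸ N) ≃* (Quotient.out b).carrier)} := by
    rw [Nat.card_eq_fintype_card, Fintype.card_sigma]
    exact Finset.sum_congr rfl fun M _ => (Nat.card_eq_fintype_card).symm
  have hinner : ∀ M : Subgroup E, Nat.card
      {N : Subgroup M //
        Nonempty ((E ⧸ M) ≃* (Quotient.out d).carrier) ∧
        Nonempty (N ≃* (Quotient.out a).carrier) ∧
        Nonempty ((M ⧸ N) ≃* (Quotient.out b).carrier)} =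
      if Nonempty ((E ⧸ M) ≃* (Quotient.out d).carrier) then
        hallNumberClass (φ M) a b else 0 := by
    intro M
    split_ifs with h
    · have h1 : hallNumberClass (φ M) a b = hallNumber M (Quotient.out a).carrier
          (Quotient.out b).carrier :=
        hallNumber_congr (Classical.choice (out_mk_equiv _)) (MulEquiv.refl _)
          (MulEquiv.refl _)
      rw [h1, hallNumber]
      exact Nat.card_congr (Equiv.subtypeEquivRight fun N => by simp [h])
    · have : IsEmpty {N : Subgroup M //
          Nonempty ((E ⧸ M) ≃* (Quotient.out d).carrier) ∧
          Nonempty (N ≃* (Quotient.out a).carrier) ∧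
          Nonempty ((M ⧸ N) ≃* (Quotient.out b).carrier)} := ⟨fun N => h N.2.1⟩
      exact Nat.card_of_isEmpty
  rw [hcard]
  simp_rw [hinner]
  rw [← Finset.sum_filter]
  set s : Finset (Subgroup E) :=
    Finset.univ.filter (fun M => Nonempty ((E ⧸ M) ≃* (Quotient.out d).carrier)) with hs
  have hfib : ∀ j ∈ s.image φ,
      (s.filter (fun M => φ M = j)).card = hallNumberClass e j d := by
    intro j _
    rw [hallNumberClass, hallNumber, Nat.card_eq_fintype_card, Fintype.card_subtype]
    congr 1
    rw [hs, Finset.filter_filter]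
    apply Finset.filter_congr
    intro M _
    rw [hφ]
    exact ⟨fun ⟨h1, h2⟩ => ⟨h2, h1⟩, fun ⟨h1, h2⟩ => ⟨h2, h1⟩⟩
  calc ∑ c ∈ (support_finite a b).toFinset,
        hallNumberClass c a b * hallNumberClass e c d
      = ∑ j ∈ s.image φ, hallNumberClass j a b * hallNumberClass e j d := by
        apply sum_eq_sum_of_support
        · intro c hc
          rw [Set.Finite.mem_toFinset, Set.mem_setOf_eq, not_not] at hc
          rw [hc, zero_mul]
        · intro c hc
          have h0 : hallNumberClass e c d = 0 := by
            by_contra h0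
            obtain ⟨M, h1, h2⟩ := (Nat.card_ne_zero.mp h0).1.some
            exact hc (Finset.mem_image.mpr ⟨M, by
              rw [hs, Finset.mem_filter]
              exact ⟨Finset.mem_univ _, h2⟩, (hφ M c).mpr h1⟩)
          rw [h0, mul_zero]
    _ = ∑ j ∈ s.image φ, ∑ M ∈ s.filter (fun M => φ M = j), hallNumberClass j a b := by
        refine Finset.sum_congr rfl fun j hj => ?_
        rw [Finset.sum_const, smul_eq_mul, hfib j hj, mul_comm]
    _ = ∑ M ∈ s.filter (fun M => φ M ∈ s.image φ), hallNumberClass (φ M) a b :=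
        Finset.sum_fiberwise_eq_sum_filter' s (s.image φ) φ _
    _ = ∑ M ∈ s, hallNumberClass (φ M) a b := by
        rw [Finset.filter_true_of_mem (fun M hM => Finset.mem_image_of_mem φ hM)]

lemma sumR [Fact p.Prime] (a b d e : FinAbPClass p) :
    ∑ c ∈ (support_finite b d).toFinset,
      hallNumberClass c b d * hallNumberClass e a c = Nat.card (P2 a b d e) := by
  classical
  set E := (Quotient.out e).carrier with hEdef
  letI : Fintype (Subgroup E) := Fintype.ofFinite _
  letI instF : ∀ N : Subgroup E, Fintype
      {B' : Subgroup (E ⧸ N) //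
        Nonempty (N ≃* (Quotient.out a).carrier) ∧
        Nonempty (B' ≃* (Quotient.out b).carrier) ∧
        Nonempty (((E ⧸ N) ⧸ B') ≃* (Quotient.out d).carrier)} := fun N => Fintype.ofFinite _
  let ψ : Subgroup E → FinAbPClass p := fun N =>
    ⟦{ carrier := E ⧸ N, isPGroup := IsPGroup.to_quotient (Quotient.out e).isPGroup N }⟧
  have hψ : ∀ (N : Subgroup E) (c : FinAbPClass p),
      ψ N = c ↔ Nonempty ((E ⧸ N) ≃* (Quotient.out c).carrier) := by
    intro N c
    exact Quotient.mk_eq_iff_out (s := FinAbPGroup.setoid p)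
  have hcard : Nat.card (P2 a b d e) =
      ∑ N : Subgroup E, Nat.card
        {B' : Subgroup (E ⧸ N) //
          Nonempty (N ≃* (Quotient.out a).carrier) ∧
          Nonempty (B' ≃* (Quotient.out b).carrier) ∧
          Nonempty (((E ⧸ N) ⧸ B') ≃* (Quotient.out d).carrier)} := by
    rw [Nat.card_eq_fintype_card, Fintype.card_sigma]
    exact Finset.sum_congr rfl fun N _ => (Nat.card_eq_fintype_card).symm
  have hinner : ∀ N : Subgroup E, Nat.card
      {B' : Subgroup (E ⧸ N) //
        Nonempty (N ≃* (Quotient.out a).carrier) ∧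
        Nonempty (B' ≃* (Quotient.out b).carrier) ∧
        Nonempty (((E ⧸ N) ⧸ B') ≃* (Quotient.out d).carrier)} =
      if Nonempty (N ≃* (Quotient.out a).carrier) then
        hallNumberClass (ψ N) b d else 0 := by
    intro N
    split_ifs with h
    · have h1 : hallNumberClass (ψ N) b d = hallNumber (E ⧸ N) (Quotient.out b).carrier
          (Quotient.out d).carrier :=
        hallNumber_congr (Classical.choice (out_mk_equiv _)) (MulEquiv.refl _)
          (MulEquiv.refl _)
      rw [h1, hallNumber]
      exact Nat.card_congr (Equiv.subtypeEquivRight fun B' => by simp [h])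
    · have : IsEmpty {B' : Subgroup (E ⧸ N) //
          Nonempty (N ≃* (Quotient.out a).carrier) ∧
          Nonempty (B' ≃* (Quotient.out b).carrier) ∧
          Nonempty (((E ⧸ N) ⧸ B') ≃* (Quotient.out d).carrier)} := ⟨fun B' => h B'.2.1⟩
      exact Nat.card_of_isEmpty
  rw [hcard]
  simp_rw [hinner]
  rw [← Finset.sum_filter]
  set s : Finset (Subgroup E) :=
    Finset.univ.filter (fun N => Nonempty (N ≃* (Quotient.out a).carrier)) with hs
  have hfib : ∀ j ∈ s.image ψ,
      (s.filter (fun N => ψ N = j)).card = hallNumberClass e a j := by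
    intro j _
    rw [hallNumberClass, hallNumber, Nat.card_eq_fintype_card, Fintype.card_subtype]
    congr 1
    rw [hs, Finset.filter_filter]
    apply Finset.filter_congr
    intro N _
    rw [hψ]
  calc ∑ c ∈ (support_finite b d).toFinset,
        hallNumberClass c b d * hallNumberClass e a c
      = ∑ j ∈ s.image ψ, hallNumberClass j b d * hallNumberClass e a j := by
        apply sum_eq_sum_of_support
        · intro c hc
          rw [Set.Finite.mem_toFinset, Set.mem_setOf_eq, not_not] at hc
          rw [hc, zero_mul]
        · intro c hc
          have h0 : hallNumberClass e a c = 0 := by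
            by_contra h0
            obtain ⟨N, h1, h2⟩ := (Nat.card_ne_zero.mp h0).1.some
            exact hc (Finset.mem_image.mpr ⟨N, by
              rw [hs, Finset.mem_filter]
              exact ⟨Finset.mem_univ _, h1⟩, (hψ N c).mpr h2⟩)
          rw [h0, mul_zero]
    _ = ∑ j ∈ s.image ψ, ∑ N ∈ s.filter (fun N => ψ N = j), hallNumberClass j b d := by
        refine Finset.sum_congr rfl fun j hj => ?_
        rw [Finset.sum_const, smul_eq_mul, hfib j hj, mul_comm]
    _ = ∑ N ∈ s.filter (fun N => ψ N ∈ s.image ψ), hallNumberClass (ψ N) b d :=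
        Finset.sum_fiberwise_eq_sum_filter' s (s.image ψ) ψ _
    _ = ∑ N ∈ s, hallNumberClass (ψ N) b d := by
        rw [Finset.filter_true_of_mem (fun N hN => Finset.mem_image_of_mem ψ hN)]

/-- First isomorphism theorem for the restriction of `mk' K` to a subgroup `M`. -/
noncomputable def quotientSubgroupMapEquiv {G : Type} [CommGroup G] (K M : Subgroup G) :
    (M ⧸ K.subgroupOf M) ≃* (M.map (QuotientGroup.mk' K)) := by
  have hker : ((QuotientGroup.mk' K).subgroupMap M).ker = K.subgroupOf M := by
    ext x
    simp only [MonoidHom.mem_ker, Subgroup.mem_subgroupOf]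
    rw [Subtype.ext_iff]
    show ((QuotientGroup.mk' K) x.1 : G ⧸ K) = 1 ↔ _
    rw [← MonoidHom.mem_ker, QuotientGroup.ker_mk']
  exact (QuotientGroup.quotientMulEquivOfEq hker.symm).trans
    (QuotientGroup.quotientKerEquivOfSurjective _
      ((QuotientGroup.mk' K).subgroupMap_surjective M))

lemma sigma_eq_P1 {a b d e : FinAbPClass p} (x y : P1 a b d e) (h1 : x.1 = y.1)
    (h2 : (x.2 : Subgroup x.1).map x.1.subtype = (y.2 : Subgroup y.1).map y.1.subtype) :
    x = y := by
  obtain ⟨M, N, hN⟩ := x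
  obtain ⟨M', N', hN'⟩ := y
  cases h1
  simp only at h2
  exact congrArg _ (Subtype.ext (Subgroup.map_injective M.subtype_injective h2))

lemma sigma_eq_P2 {a b d e : FinAbPClass p} (x y : P2 a b d e) (h1 : x.1 = y.1)
    (h2 : (x.2 : Subgroup _).comap (QuotientGroup.mk' x.1) =
      (y.2 : Subgroup _).comap (QuotientGroup.mk' y.1)) :
    x = y := by
  obtain ⟨N, B, hB⟩ := x
  obtain ⟨N', B', hB'⟩ := y
  cases h1
  simp only at h2
  exact congrArg _ (Subtype.ext
    (Subgroup.comap_injective (QuotientGroup.mk'_surjective N) h2))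

/-- The forward map `P1 → P2`. -/
noncomputable def toP2 {a b d e : FinAbPClass p} (x : P1 a b d e) : P2 a b d e :=
  ⟨(x.2.1 : Subgroup x.1).map x.1.subtype,
    ⟨x.1.map (QuotientGroup.mk' ((x.2.1 : Subgroup x.1).map x.1.subtype)), by
      obtain ⟨hD, hA, hB⟩ := x.2.2
      refine ⟨?_, ?_, ?_⟩
      · exact hA.map fun f =>
          ((x.2.1.equivMapOfInjective x.1.subtype x.1.subtype_injective).symm.trans f)
      · refine hB.map fun f => ?_
        have hEq : ((x.2.1 : Subgroup x.1).map x.1.subtype).subgroupOf x.1 = x.2.1 := by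
          rw [Subgroup.subgroupOf,
            Subgroup.comap_map_eq_self_of_injective x.1.subtype_injective]
        exact (quotientSubgroupMapEquiv ((x.2.1 : Subgroup x.1).map x.1.subtype) x.1).symm.trans
          ((QuotientGroup.quotientMulEquivOfEq hEq).trans f)
      · exact hD.map fun f =>
          (QuotientGroup.quotientQuotientEquivQuotient _ x.1
            (Subgroup.map_subtype_le x.2.1)).trans f⟩⟩

lemma le_comap_of_mem {E : Type} [CommGroup E] {N : Subgroup E} {B' : Subgroup (E ⧸ N)} :
    N ≤ B'.comap (QuotientGroup.mk' N) := by
  intro x hx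
  refine Subgroup.mem_comap.mpr ?_
  have : (QuotientGroup.mk' N) x = 1 := by
    rw [← MonoidHom.mem_ker, QuotientGroup.ker_mk']; exact hx
  rw [this]; exact B'.one_mem

/-- The backward map `P2 → P1`. -/
noncomputable def toP1 {a b d e : FinAbPClass p} (x : P2 a b d e) : P1 a b d e :=
  ⟨(x.2.1 : Subgroup _).comap (QuotientGroup.mk' x.1),
    ⟨x.1.subgroupOf _, by
      obtain ⟨hA, hB, hD⟩ := x.2.2
      have hmap : ((x.2.1 : Subgroup _).comap (QuotientGroup.mk' x.1)).map
          (QuotientGroup.mk' x.1) = x.2.1 :=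
        Subgroup.map_comap_eq_self_of_surjective (QuotientGroup.mk'_surjective x.1) _
      refine ⟨?_, ?_, ?_⟩
      · refine hD.map fun f => ?_
        exact ((QuotientGroup.quotientQuotientEquivQuotient x.1 _ le_comap_of_mem).symm.trans
          (QuotientGroup.quotientMulEquivOfEq hmap)).trans f
      · exact hA.map fun f => (Subgroup.subgroupOfEquivOfLe le_comap_of_mem).trans f
      · refine hB.map fun f => ?_
        exact ((quotientSubgroupMapEquiv x.1 _).trans (MulEquiv.subgroupCongr hmap)).trans f⟩⟩

set_option maxHeartbeats 1000000 in
lemma card_P1_eq_card_P2 (a b d e : FinAbPClass p) :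
    Nat.card (P1 a b d e) = Nat.card (P2 a b d e) := by
  apply Nat.card_congr
  refine ⟨toP2, toP1, ?_, ?_⟩
  · -- left_inv
    intro x
    have hM : (toP1 (toP2 x)).1 = x.1 := by
      show ((x.1.map (QuotientGroup.mk' ((x.2.1 : Subgroup x.1).map x.1.subtype))).comap
        (QuotientGroup.mk' ((x.2.1 : Subgroup x.1).map x.1.subtype))) = x.1
      rw [Subgroup.comap_map_eq, QuotientGroup.ker_mk',
        sup_eq_left.mpr (Subgroup.map_subtype_le x.2.1)]
    apply sigma_eq_P1 _ _ hM
    show (((x.2.1 : Subgroup x.1).map x.1.subtype).subgroupOf (toP1 (toP2 x)).1).map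
      (toP1 (toP2 x)).1.subtype = (x.2.1 : Subgroup x.1).map x.1.subtype
    rw [Subgroup.subgroupOf_map_subtype, hM,
      inf_eq_left.mpr (Subgroup.map_subtype_le x.2.1)]
  · -- right_inv
    intro x
    have hN : (toP2 (toP1 x)).1 = x.1 := by
      show ((x.1.subgroupOf ((x.2.1 : Subgroup _).comap (QuotientGroup.mk' x.1))).map
        ((x.2.1 : Subgroup _).comap (QuotientGroup.mk' x.1)).subtype) = x.1
      rw [Subgroup.subgroupOf_map_subtype, inf_eq_left.mpr le_comap_of_mem]
    apply sigma_eq_P2 _ _ hN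
    show ((toP1 x).1.map (QuotientGroup.mk' (toP2 (toP1 x)).1)).comap
      (QuotientGroup.mk' (toP2 (toP1 x)).1) = (x.2.1 : Subgroup _).comap (QuotientGroup.mk' x.1)
    rw [Subgroup.comap_map_eq, QuotientGroup.ker_mk', hN]
    show (x.2.1 : Subgroup _).comap (QuotientGroup.mk' x.1) ⊔ x.1 = _
    rw [sup_eq_left.mpr le_comap_of_mem]

lemma out_eq_iff {c b : FinAbPClass p} :
    Nonempty ((Quotient.out c).carrier ≃* (Quotient.out b).carrier) ↔ c = b :=
  Quotient.out_equiv_out (s := FinAbPGroup.setoid p)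

lemma triv_out_subsingleton : Subsingleton (Quotient.out (trivialClass p)).carrier := by
  obtain ⟨f⟩ := out_mk_equiv (p := p)
    { carrier := PUnit, isPGroup := fun _ => ⟨0, Subsingleton.elim _ _⟩ }
  exact f.toEquiv.subsingleton

lemma mulFun_triv_left (b : FinAbPClass p) :
    mulFun (trivialClass p) b = Finsupp.single b 1 := by
  classical
  have := triv_out_subsingleton (p := p)
  ext c
  rw [mulFun_apply, hallNumberClass, hallNumber_triv_left, Finsupp.single_apply]
  by_cases h : c = b
  · rw [if_pos (out_eq_iff.mpr h), if_pos h.symm]; norm_num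
  · rw [if_neg (fun hn => h (out_eq_iff.mp hn)), if_neg (fun hn => h hn.symm)]; norm_num

lemma mulFun_triv_right (a : FinAbPClass p) :
    mulFun a (trivialClass p) = Finsupp.single a 1 := by
  classical
  have := triv_out_subsingleton (p := p)
  ext c
  rw [mulFun_apply, hallNumberClass, hallNumber_triv_right, Finsupp.single_apply]
  by_cases h : c = a
  · rw [if_pos (out_eq_iff.mpr h), if_pos h.symm]; norm_num
  · rw [if_neg (fun hn => h (out_eq_iff.mp hn)), if_neg (fun hn => h hn.symm)]; norm_num

lemma hallMul_left_apply (f : FinAbPClass p →₀ ℤ) (d e : FinAbPClass p) :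
    hallMul p f (Finsupp.single d 1) e =
      ∑ c ∈ f.support, f c * (hallNumberClass e c d : ℤ) := by
  rw [hallMul, Finsupp.lsum_apply]
  simp only [Finsupp.sum, LinearMap.toSpanSingleton_apply, LinearMap.sum_apply,
    Finset.sum_apply, LinearMap.smul_apply, inner_single, one_smul,
    Finsupp.finset_sum_apply, Finsupp.smul_apply, mulFun_apply, smul_eq_mul]

lemma hallMul_right_apply (a : FinAbPClass p) (g : FinAbPClass p →₀ ℤ) (e : FinAbPClass p) :
    hallMul p (Finsupp.single a 1) g e =
      ∑ c ∈ g.support, g c * (hallNumberClass e a c : ℤ) := by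
  rw [hallMul_single, one_smul, inner, Finsupp.lsum_apply]
  simp only [Finsupp.sum, LinearMap.toSpanSingleton_apply, Finsupp.finset_sum_apply,
    Finsupp.smul_apply, mulFun_apply, smul_eq_mul]

lemma mulFun_assoc [Fact p.Prime] (a b d : FinAbPClass p) :
    hallMul p (mulFun a b) (Finsupp.single d 1) =
      hallMul p (Finsupp.single a 1) (mulFun b d) := by
  classical
  ext e
  rw [hallMul_left_apply, hallMul_right_apply]
  have hL : ∑ c ∈ (mulFun a b).support, mulFun a b c * (hallNumberClass e c d : ℤ) =
      ((∑ c ∈ (support_finite a b).toFinset,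
        hallNumberClass c a b * hallNumberClass e c d : ℕ) : ℤ) := by
    push_cast
    refine Finset.sum_subset Finsupp.support_onFinset_subset (fun x _ hx => ?_)
    rw [Finsupp.notMem_support_iff] at hx
    rw [hx, zero_mul]
  have hR : ∑ c ∈ (mulFun b d).support, mulFun b d c * (hallNumberClass e a c : ℤ) =
      ((∑ c ∈ (support_finite b d).toFinset,
        hallNumberClass c b d * hallNumberClass e a c : ℕ) : ℤ) := by
    push_cast
    refine Finset.sum_subset Finsupp.support_onFinset_subset (fun x _ hx => ?_)
    rw [Finsupp.notMem_support_iff] at hx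
    rw [hx, zero_mul]
  rw [hL, hR, sumL, sumR, card_P1_eq_card_P2]

lemma single_eq_smul (b : FinAbPClass p) (r : ℤ) :
    (Finsupp.single b r : FinAbPClass p →₀ ℤ) = r • Finsupp.single b 1 := by
  rw [Finsupp.smul_single', mul_one]

lemma assoc3 [Fact p.Prime] (a b d : FinAbPClass p) :
    hallMul p (hallMul p (Finsupp.single a 1) (Finsupp.single b 1)) (Finsupp.single d 1) =
      hallMul p (Finsupp.single a 1) (hallMul p (Finsupp.single b 1) (Finsupp.single d 1)) := by
  rw [hallMul_single_single, mulFun_assoc, hallMul_single_single]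

lemma assoc2 [Fact p.Prime] (a b : FinAbPClass p) (z : FinAbPClass p →₀ ℤ) :
    hallMul p (hallMul p (Finsupp.single a 1) (Finsupp.single b 1)) z =
      hallMul p (Finsupp.single a 1) (hallMul p (Finsupp.single b 1) z) := by
  induction z using Finsupp.induction_linear with
  | zero => simp
  | add f g hf hg => simp [map_add, hf, hg]
  | single d t => simp only [single_eq_smul d t, map_smul, assoc3]

lemma assoc1 [Fact p.Prime] (a : FinAbPClass p) (y z : FinAbPClass p →₀ ℤ) :
    hallMul p (hallMul p (Finsupp.single a 1) y) z =
      hallMul p (Finsupp.single a 1) (hallMul p y z) := by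
  induction y using Finsupp.induction_linear with
  | zero => simp
  | add f g hf hg => simp [map_add, LinearMap.add_apply, hf, hg]
  | single b s => simp only [single_eq_smul b s, map_smul, LinearMap.smul_apply, assoc2]

lemma hallMul_assoc [Fact p.Prime] (x y z : FinAbPClass p →₀ ℤ) :
    hallMul p (hallMul p x y) z = hallMul p x (hallMul p y z) := by
  induction x using Finsupp.induction_linear with
  | zero => simp
  | add f g hf hg => simp [map_add, LinearMap.add_apply, hf, hg]
  | single a r => simp only [single_eq_smul a r, map_smul, LinearMap.smul_apply, assoc1]

lemma hallMul_one_left [Fact p.Prime] (x : FinAbPClass p →₀ ℤ) :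
    hallMul p (Finsupp.single (trivialClass p) 1) x = x := by
  induction x using Finsupp.induction_linear with
  | zero => simp
  | add f g hf hg => simp [map_add, hf, hg]
  | single b r =>
    rw [single_eq_smul b r, map_smul, hallMul_single_single, mulFun_triv_left]

lemma hallMul_one_right [Fact p.Prime] (x : FinAbPClass p →₀ ℤ) :
    hallMul p x (Finsupp.single (trivialClass p) 1) = x := by
  induction x using Finsupp.induction_linear with
  | zero => simp
  | add f g hf hg => simp [map_add, LinearMap.add_apply, hf, hg]
  | single b r =>
    rw [single_eq_smul b r, map_smul, LinearMap.smul_apply, hallMul_single_single,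
      mulFun_triv_right]

end HallAux

theorem stmt_1 (p : ℕ) [Fact p.Prime] :
    ∃ (mul : (FinAbPClass p →₀ ℤ) →ₗ[ℤ] (FinAbPClass p →₀ ℤ) →ₗ[ℤ] (FinAbPClass p →₀ ℤ))
      (one : FinAbPClass p →₀ ℤ),
      (∀ a b c : FinAbPClass p,
        mul (Finsupp.single a 1) (Finsupp.single b 1) c = (hallNumberClass c a b : ℤ)) ∧
      (∀ x y z, mul (mul x y) z = mul x (mul y z)) ∧
      (∀ x, mul one x = x) ∧ (∀ x, mul x one = x) ∧
      one = Finsupp.single (trivialClass p) 1 := by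
  refine ⟨HallAux.hallMul p, Finsupp.single (trivialClass p) 1, ?_, ?_, ?_, ?_, rfl⟩
  · intro a b c
    rw [HallAux.hallMul_single_single, HallAux.mulFun_apply]
  · exact HallAux.hallMul_assoc
  · exact HallAux.hallMul_one_left
  · exact HallAux.hallMul_one_right
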